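/- arXiv:1807.07341 — 2 statements merged into one kernel-verified Lean document; each statement's English description precedes it below -/
import Mathlib

section
/- For every real p > 2 there exists a constant c > 0 depending only on p such that for all sufficiently large X, ∫_0^1 |M_τ(α)|^p dα ≥ c · X^{p-1} (log X)^p. -/
open Finset

/-- `e(x) = e^{2πix}`. -/
noncomputable def eFun (x : ℝ) : ℂ := Complex.exp (2 * Real.pi * Complex.I * x)

/-- The divisor function `τ(n)`. -/
def tau (n : ℕ) : ℕ := n.divisors.card

/-- The exponential sum `M_τ(α) = Σ_{n ≤ X} τ(n) e(nα)` (sum over positive integers `n ≤ X`). -/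
noncomputable def Mtau (X : ℝ) (α : ℝ) : ℂ :=
  ∑ n ∈ Finset.Icc 1 ⌊X⌋₊, (tau n : ℂ) * eFun (n * α)

lemma tau_sum_eq (N : ℕ) : ∑ n ∈ Icc 1 N, tau n = ∑ d ∈ Icc 1 N, N / d := by
  have h1 : ∀ n ∈ Icc 1 N, tau n = #{d ∈ Icc 1 N | d ∣ n} := by
    intro n hn
    simp only [mem_Icc] at hn
    unfold tau
    rw [Nat.divisors]
    congr 1
    ext d
    simp only [Finset.mem_filter, Finset.mem_Ico, Finset.mem_Icc]
    constructor
    · rintro ⟨⟨h1, h2⟩, h3⟩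
      exact ⟨⟨h1, le_trans (Nat.le_of_lt_succ h2) hn.2⟩, h3⟩
    · rintro ⟨⟨h1, _⟩, h3⟩
      exact ⟨⟨h1, Nat.lt_succ_of_le (Nat.le_of_dvd (by omega) h3)⟩, h3⟩
  rw [Finset.sum_congr rfl h1]
  simp_rw [Finset.card_filter]
  rw [Finset.sum_comm]
  refine Finset.sum_congr rfl fun d hd => ?_
  rw [← Nat.Ioc_filter_dvd_card_eq_div, ← Finset.Icc_add_one_left_eq_Ioc, Finset.card_filter, zero_add]

lemma sum_tau_lower (N : ℕ) (hN : 1 ≤ N) :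
    (N : ℝ) * (Real.log N - 1) ≤ ∑ n ∈ Icc 1 N, (tau n : ℝ) := by
  have hcast : (∑ n ∈ Icc 1 N, (tau n : ℝ)) = ∑ d ∈ Icc 1 N, ((N / d : ℕ) : ℝ) := by
    rw [← Nat.cast_sum, ← Nat.cast_sum, tau_sum_eq]
  rw [hcast]
  have hstep : ∀ d ∈ Icc 1 N, (N : ℝ) / d - 1 ≤ ((N / d : ℕ) : ℝ) := by
    intro d hd
    simp only [mem_Icc] at hd
    have hd0 : 0 < d := hd.1
    have : N < (N / d + 1) * d := by
      have h := Nat.div_add_mod N d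
      have h2 := Nat.mod_lt N hd0
      nlinarith
    have h2 : (N : ℝ) < ((N / d : ℕ) + 1) * d := by exact_mod_cast this
    have hd0' : (0 : ℝ) < d := by exact_mod_cast hd0
    rw [div_sub_one hd0'.ne', div_le_iff₀ hd0']
    nlinarith [h2]
  calc (N : ℝ) * (Real.log N - 1)
      ≤ ∑ d ∈ Icc 1 N, ((N : ℝ) / d - 1) := by
        have hcard : (Icc 1 N).card = N := by simp
        rw [Finset.sum_sub_distrib, Finset.sum_const, hcard, nsmul_eq_mul, mul_one]
        simp_rw [div_eq_mul_inv]
        rw [← Finset.mul_sum]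
        have hharm : Real.log N ≤ ∑ d ∈ Icc 1 N, (d : ℝ)⁻¹ := by
          have h1 := log_add_one_le_harmonic N
          have h2 : (harmonic N : ℝ) = ∑ d ∈ Icc 1 N, (d : ℝ)⁻¹ := by
            simp [harmonic_eq_sum_Icc]
          have h3 : Real.log N ≤ Real.log (N + 1) := by
            apply Real.log_le_log (by exact_mod_cast hN) (by linarith)
          push_cast at h1
          linarith
        have hN0 : (0:ℝ) ≤ N := Nat.cast_nonneg N
        have hsn : (0:ℝ) ≤ ∑ d ∈ Icc 1 N, (d : ℝ)⁻¹ :=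
          Finset.sum_nonneg fun d _ => inv_nonneg.2 (Nat.cast_nonneg d)
        nlinarith
    _ ≤ _ := Finset.sum_le_sum hstep

lemma log_ge_four {X : ℝ} (hX : (55:ℝ) ≤ X) : (4:ℝ) ≤ Real.log X := by
  have h1 : Real.exp 4 ≤ X := by
    have h2 : Real.exp 4 = Real.exp 1 ^ (4:ℕ) := by
      rw [← Real.exp_nat_mul]; norm_num
    have h3 : Real.exp 1 ^ (4:ℕ) ≤ 2.7182818286 ^ (4:ℕ) :=
      pow_le_pow_left₀ (Real.exp_pos 1).le Real.exp_one_lt_d9.le 4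
    have : (2.7182818286:ℝ) ^ (4:ℕ) ≤ 55 := by norm_num
    linarith
  calc (4:ℝ) = Real.log (Real.exp 4) := (Real.log_exp 4).symm
    _ ≤ Real.log X := Real.log_le_log (Real.exp_pos 4) h1

lemma S_lower {X : ℝ} (hX : (55:ℝ) ≤ X) :
    X * Real.log X / 4 ≤ ∑ n ∈ Icc 1 ⌊X⌋₊, (tau n : ℝ) := by
  have hX0 : (0:ℝ) < X := by linarith
  set N := ⌊X⌋₊ with hNdef
  have hN1 : 1 ≤ N := Nat.le_floor (by push_cast; linarith)
  have hNX : (N : ℝ) ≤ X := Nat.floor_le hX0.le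
  have hNX2 : X - 1 ≤ (N : ℝ) := (Nat.sub_one_lt_floor X).le
  have hlog4 : (4:ℝ) ≤ Real.log X := log_ge_four hX
  have hlog2 : Real.log 2 ≤ 1 := by
    have := Real.log_le_sub_one_of_pos (by norm_num : (0:ℝ) < 2)
    linarith
  have hlogN : Real.log X - 1 ≤ Real.log N := by
    have h1 : Real.log (X / 2) ≤ Real.log N := by
      apply Real.log_le_log (by linarith) (by linarith)
    rw [Real.log_div hX0.ne' (by norm_num)] at h1
    linarith
  have hmain := sum_tau_lower N hN1
  have hNhalf : X / 2 ≤ (N:ℝ) := by linarith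
  have h2 : X / 2 * (Real.log X / 2) ≤ (N:ℝ) * (Real.log N - 1) := by
    have ha : Real.log X / 2 ≤ Real.log N - 1 := by linarith
    have hb : (0:ℝ) ≤ Real.log X / 2 := by linarith
    nlinarith
  nlinarith

lemma eFun_re (x : ℝ) : (eFun x).re = Real.cos (2 * Real.pi * x) := by
  have h : (2 * (Real.pi : ℂ) * Complex.I * x) = ((2 * Real.pi * x : ℝ) : ℂ) * Complex.I := by
    push_cast; ring
  rw [eFun, h, Complex.exp_ofReal_mul_I_re]

lemma Mtau_re (X α : ℝ) :
    (Mtau X α).re = ∑ n ∈ Icc 1 ⌊X⌋₊, (tau n : ℝ) * Real.cos (2 * Real.pi * (n * α)) := by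
  rw [Mtau, Complex.re_sum]
  refine Finset.sum_congr rfl fun n _ => ?_
  rw [Complex.mul_re, eFun_re]
  simp

lemma continuous_Mtau (X : ℝ) : Continuous (Mtau X) := by
  unfold Mtau eFun
  exact continuous_finset_sum _ fun n _ => continuous_const.mul
    (Complex.continuous_exp.comp (by fun_prop))

theorem divisor_exponential_sum_moment_lower (p : ℝ) (hp : 2 < p) :
    ∃ c : ℝ, 0 < c ∧ ∃ X₀ : ℝ, ∀ X : ℝ, X₀ ≤ X →
      c * X ^ (p - 1) * Real.log X ^ p
        ≤ ∫ α in (0:ℝ)..1, ‖Mtau X α‖ ^ p := by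
  have hp0 : (0:ℝ) < p := by linarith
  refine ⟨(17 * (8:ℝ) ^ p)⁻¹, by positivity, 55, fun X hX => ?_⟩
  have hX0 : (0:ℝ) < X := by linarith
  set N := ⌊X⌋₊ with hNdef
  set S : ℝ := ∑ n ∈ Icc 1 N, (tau n : ℝ) with hSdef
  set δ : ℝ := 1 / (17 * X) with hδdef
  have hδ0 : 0 < δ := by positivity
  have hδ1 : δ ≤ 1 := by
    rw [hδdef, div_le_one (by positivity)]; linarith
  have hS : X * Real.log X / 4 ≤ S := S_lower hX
  have hSnn : 0 ≤ S := Finset.sum_nonneg fun n _ => Nat.cast_nonneg _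
  have hlog : (4:ℝ) ≤ Real.log X := log_ge_four hX
  set f : ℝ → ℝ := fun α => ‖Mtau X α‖ ^ p with hfdef
  have hf_cont : Continuous f :=
    (continuous_norm.comp (continuous_Mtau X)).rpow_const fun x => Or.inr hp0.le
  have hf_nn : ∀ α, 0 ≤ f α := fun α => Real.rpow_nonneg (norm_nonneg _) p
  -- pointwise lower bound on [0, δ]
  have hlb : ∀ α ∈ Set.Icc (0:ℝ) δ, S / 2 ≤ ‖Mtau X α‖ := by
    intro α hα
    obtain ⟨hα0, hαδ⟩ := hα
    refine le_trans ?_ (Complex.re_le_norm _)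
    rw [Mtau_re]
    have hterm : ∀ n ∈ Icc 1 N, (tau n : ℝ) * (1/2) ≤ (tau n : ℝ) * Real.cos (2 * Real.pi * (n * α)) := by
      intro n hn
      simp only [mem_Icc] at hn
      have hnX : (n : ℝ) ≤ X := le_trans (by exact_mod_cast hn.2) (Nat.floor_le hX0.le)
      refine mul_le_mul_of_nonneg_left ?_ (Nat.cast_nonneg _)
      set t := 2 * Real.pi * (n * α) with htdef
      have ht0 : 0 ≤ t := by
        have : (0:ℝ) ≤ (n:ℝ) * α := mul_nonneg (Nat.cast_nonneg n) hα0
        positivity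
      have hnα : (n:ℝ) * α ≤ 1 / 17 := by
        have h1 : (n:ℝ) * α ≤ X * δ := by
          apply mul_le_mul hnX hαδ hα0 hX0.le
        rw [hδdef] at h1
        calc (n:ℝ) * α ≤ X * (1 / (17 * X)) := h1
          _ = 1 / 17 := by field_simp
      have ht : t ≤ 1/2 := by
        have hπ : Real.pi ≤ 4 := Real.pi_le_four
        have hnα0 : (0:ℝ) ≤ (n:ℝ) * α := mul_nonneg (Nat.cast_nonneg n) hα0
        calc t = 2 * Real.pi * ((n:ℝ) * α) := rfl
          _ ≤ 2 * 4 * (1/17) := by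
              apply mul_le_mul (by nlinarith [Real.pi_pos]) hnα hnα0 (by norm_num)
          _ ≤ 1/2 := by norm_num
      have hcos := Real.one_sub_sq_div_two_le_cos (x := t)
      nlinarith
    calc S / 2 = ∑ n ∈ Icc 1 N, (tau n : ℝ) * (1/2) := by
          rw [← Finset.sum_mul, hSdef]; ring
      _ ≤ _ := Finset.sum_le_sum hterm
  -- integral bounds
  have hint1 : IntervalIntegrable f MeasureTheory.volume 0 1 := hf_cont.intervalIntegrable 0 1
  have hint2 : IntervalIntegrable f MeasureTheory.volume 0 δ := hf_cont.intervalIntegrable 0 δ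
  have h2 : δ * (S / 2) ^ p ≤ ∫ α in (0:ℝ)..δ, f α := by
    have hmono := intervalIntegral.integral_mono_on (μ := MeasureTheory.volume) hδ0.le
      (intervalIntegrable_const (c := (S/2)^p)) hint2
      (fun α hα => Real.rpow_le_rpow (by positivity) (hlb α hα) hp0.le)
    simpa using hmono
  have h3 : (∫ α in (0:ℝ)..δ, f α) ≤ ∫ α in (0:ℝ)..1, f α := by
    apply intervalIntegral.integral_mono_interval le_rfl hδ0.le hδ1
      (MeasureTheory.ae_of_all _ fun x => hf_nn x) hint1
  have hfinal : (17 * (8:ℝ) ^ p)⁻¹ * X ^ (p - 1) * Real.log X ^ p ≤ δ * (S / 2) ^ p := by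
    have hb1 : X * Real.log X / 8 ≤ S / 2 := by linarith
    have hb2 : (X * Real.log X / 8) ^ p ≤ (S / 2) ^ p :=
      Real.rpow_le_rpow (by positivity) hb1 hp0.le
    have heq : (17 * (8:ℝ) ^ p)⁻¹ * X ^ (p - 1) * Real.log X ^ p
        = δ * (X * Real.log X / 8) ^ p := by
      rw [hδdef, Real.div_rpow (by positivity) (by norm_num),
        Real.mul_rpow hX0.le (by linarith : (0:ℝ) ≤ Real.log X),
        Real.rpow_sub_one hX0.ne']
      have h8 : (0:ℝ) < (8:ℝ) ^ p := Real.rpow_pos_of_pos (by norm_num) p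
      field_simp
    rw [heq]
    exact mul_le_mul_of_nonneg_left hb2 hδ0.le
  calc (17 * (8:ℝ) ^ p)⁻¹ * X ^ (p - 1) * Real.log X ^ p ≤ δ * (S / 2) ^ p := hfinal
    _ ≤ ∫ α in (0:ℝ)..δ, f α := h2
    _ ≤ _ := h3
end

section
/- For every positive integer s, as X → ∞ (X a positive integer), the number of 2s-tuples (x_1, …, x_s, y_1, …, y_s) of integers with 1 ≤ x_i, y_i ≤ X and x_1 + ⋯ + x_s = y_1 + ⋯ + y_s is asymptotic to C_s · X^{2s−1} for some constant C_s > 0 depending only on s. -/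
open Finset Filter
open Real MeasureTheory intervalIntegral Topology

noncomputable def ee (t : ℝ) : ℂ := Complex.exp (2 * Real.pi * t * Complex.I)

lemma ee_add (a b : ℝ) : ee (a + b) = ee a * ee b := by
  simp [ee, ← Complex.exp_add]; ring_nf

lemma ee_norm (t : ℝ) : ‖ee t‖ = 1 := by
  simp [ee, Complex.norm_exp]

lemma ee_int (m : ℤ) : ∫ θ in (0:ℝ)..1, ee (m * θ) = if m = 0 then 1 else 0 := by
  rcases eq_or_ne m 0 with rfl | hm
  · simp [ee]
  · have hc : (2 * Real.pi * m * Complex.I : ℂ) ≠ 0 := by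
      simp [Real.pi_ne_zero, Complex.I_ne_zero, hm]
    have : ∀ θ : ℝ, ee (m * θ) = Complex.exp ((2 * Real.pi * m * Complex.I) * θ) := by
      intro θ; unfold ee; push_cast; ring_nf
    rw [if_neg hm]
    simp_rw [this]
    rw [integral_exp_mul_complex hc]
    have h1 : (2 * Real.pi * m * Complex.I : ℂ) * (1:ℝ) = m * (2 * Real.pi * Complex.I) := by
      push_cast; ring
    simp only [h1, Complex.ofReal_zero, mul_zero, Complex.exp_zero]
    rw [Complex.exp_int_mul_two_pi_mul_I]
    simp

lemma ee_sum {ι : Type*} (t : Finset ι) (f : ι → ℝ) :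
    ee (∑ i ∈ t, f i) = ∏ i ∈ t, ee (f i) := by
  unfold ee
  rw [← Complex.exp_sum]
  congr 1
  push_cast
  rw [Finset.mul_sum, Finset.sum_mul]

noncomputable def DD (X : ℕ) (θ : ℝ) : ℂ := ∑ x ∈ Finset.Icc 1 X, ee (x * θ)

lemma DD_pow (s X : ℕ) (c θ : ℝ) :
    (∑ x ∈ Finset.Icc 1 X, ee (c * (x * θ))) ^ s
      = ∑ p ∈ Fintype.piFinset (fun _ : Fin s => Finset.Icc 1 X),
          ee (c * ((∑ i, (p i : ℝ)) * θ)) := by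
  rw [← Fin.prod_const, Finset.prod_univ_sum]
  refine Finset.sum_congr rfl fun p _ => ?_
  rw [show c * ((∑ i, (p i : ℝ)) * θ) = ∑ i : Fin s, c * ((p i : ℝ) * θ) by
    rw [Finset.sum_mul, Finset.mul_sum]]
  rw [ee_sum]

lemma ee_conj (t : ℝ) : (starRingEnd ℂ) (ee t) = ee (-t) := by
  unfold ee
  rw [← Complex.exp_conj]
  congr 1
  simp only [map_mul, Complex.conj_I, Complex.conj_ofReal, map_ofNat]
  push_cast
  ring

/-- The number of `2s`-tuples `(x, y)` with entries in `{1, …, X}` and equal coordinate sums. -/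
def tupleCount (s X : ℕ) : ℕ :=
  (((Fintype.piFinset fun _ : Fin s => Finset.Icc 1 X) ×ˢ
      (Fintype.piFinset fun _ : Fin s => Finset.Icc 1 X)).filter
    fun xy => ∑ i, xy.1 i = ∑ i, xy.2 i).card

lemma ee_continuous : Continuous ee := by
  unfold ee; fun_prop

lemma ee_comp_continuous (c : ℝ) : Continuous fun θ : ℝ => ee (c * θ) :=
  ee_continuous.comp (by fun_prop)

lemma tupleCount_eq (s X : ℕ) :
    ((tupleCount s X : ℂ)) = ∫ θ in (0:ℝ)..1, (DD X θ) ^ s * ((starRingEnd ℂ) (DD X θ)) ^ s := by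
  set P := Fintype.piFinset fun _ : Fin s => Finset.Icc 1 X with hP
  have hexp : ∀ θ : ℝ, (DD X θ) ^ s * ((starRingEnd ℂ) (DD X θ)) ^ s
      = ∑ pq ∈ P ×ˢ P, ee ((((∑ i, ((pq.1 i : ℕ) : ℤ)) - ∑ i, ((pq.2 i : ℕ) : ℤ) : ℤ) : ℝ) * θ) := by
    intro θ
    have h1 : (DD X θ) ^ s = ∑ p ∈ P, ee ((1:ℝ) * ((∑ i, (p i : ℝ)) * θ)) := by
      rw [show DD X θ = ∑ x ∈ Finset.Icc 1 X, ee ((1:ℝ) * (x * θ)) by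
        unfold DD; simp only [one_mul]]
      exact DD_pow s X 1 θ
    have h2 : ((starRingEnd ℂ) (DD X θ)) ^ s
        = ∑ q ∈ P, ee ((-1:ℝ) * ((∑ i, (q i : ℝ)) * θ)) := by
      rw [show (starRingEnd ℂ) (DD X θ) = ∑ x ∈ Finset.Icc 1 X, ee ((-1:ℝ) * (x * θ)) by
        unfold DD; rw [map_sum]; exact Finset.sum_congr rfl fun x _ => by
          rw [ee_conj]; ring_nf]
      exact DD_pow s X (-1) θ
    rw [h1, h2, Finset.sum_mul_sum, Finset.sum_product]
    refine Finset.sum_congr rfl fun p _ => Finset.sum_congr rfl fun q _ => ?_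
    rw [← ee_add]
    congr 1
    push_cast
    ring
  simp_rw [hexp]
  rw [intervalIntegral.integral_finset_sum (fun pq _ =>
    ((ee_comp_continuous _).intervalIntegrable 0 1))]
  have horth : ∀ pq : (Fin s → ℕ) × (Fin s → ℕ),
      (∫ θ in (0:ℝ)..1, ee ((((∑ i, ((pq.1 i : ℕ) : ℤ)) - ∑ i, ((pq.2 i : ℕ) : ℤ) : ℤ) : ℝ) * θ))
        = if (∑ i, pq.1 i = ∑ i, pq.2 i) then (1:ℂ) else 0 := by
    intro pq
    rw [ee_int ((∑ i, ((pq.1 i : ℕ) : ℤ)) - ∑ i, ((pq.2 i : ℕ) : ℤ))]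
    congr 1
    rw [sub_eq_zero, eq_iff_iff]
    exact ⟨fun h => by exact_mod_cast h, fun h => by exact_mod_cast h⟩
  simp_rw [horth]
  rw [Finset.sum_boole]
  unfold tupleCount
  norm_num
  rfl

lemma tupleCount_eq_norm (s X : ℕ) :
    (tupleCount s X : ℝ) = ∫ θ in (0:ℝ)..1, ‖DD X θ‖ ^ (2 * s) := by
  have h := tupleCount_eq s X
  have h2 : ∀ θ : ℝ, (DD X θ) ^ s * ((starRingEnd ℂ) (DD X θ)) ^ s
      = ((‖DD X θ‖ ^ (2 * s) : ℝ) : ℂ) := by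
    intro θ
    rw [← mul_pow, Complex.mul_conj]
    push_cast
    rw [Complex.normSq_eq_norm_sq]
    push_cast
    rw [← pow_mul]
  simp_rw [h2] at h
  rw [intervalIntegral.integral_ofReal] at h
  exact_mod_cast h

lemma ee_pow (n : ℕ) (t : ℝ) : ee ((n : ℝ) * t) = ee t ^ n := by
  unfold ee
  rw [← Complex.exp_nat_mul]
  congr 1
  push_cast
  ring

lemma norm_ee_sub_one (t : ℝ) : ‖ee t - 1‖ = 2 * |Real.sin (π * t)| := by
  have e1 : ee t - 1
      = Complex.exp (((π * t : ℝ) : ℂ) * Complex.I)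
        * (Complex.exp (((π * t : ℝ) : ℂ) * Complex.I)
            - Complex.exp ((-(π * t : ℝ) : ℝ) * Complex.I)) := by
    rw [mul_sub, ← Complex.exp_add, ← Complex.exp_add]
    unfold ee
    push_cast
    ring_nf
    rw [Complex.exp_zero]
    ring
  have e2 : Complex.exp (((π * t : ℝ) : ℂ) * Complex.I)
      - Complex.exp ((-(π * t : ℝ) : ℝ) * Complex.I)
      = 2 * (Real.sin (π * t) : ℂ) * Complex.I := by
    rw [Complex.exp_mul_I, Complex.exp_mul_I, ← Complex.ofReal_sin, ← Complex.ofReal_cos,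
      ← Complex.ofReal_sin, ← Complex.ofReal_cos, Real.sin_neg, Real.cos_neg]
    push_cast
    ring
  rw [e1, e2]
  rw [norm_mul, Complex.norm_exp_ofReal_mul_I, one_mul]
  rw [norm_mul, norm_mul]
  simp [← Complex.ofReal_sin]

lemma ee_ne_one {θ : ℝ} (h : Real.sin (π * θ) ≠ 0) : ee θ ≠ 1 := by
  intro hee
  apply h
  have := norm_ee_sub_one θ
  rw [hee, sub_self, norm_zero] at this
  have h2 : |Real.sin (π * θ)| = 0 := by linarith
  exact abs_eq_zero.mp h2

lemma DD_geom (X : ℕ) (θ : ℝ) (h : Real.sin (π * θ) ≠ 0) :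
    DD X θ = ee θ * ((ee θ ^ X - 1) / (ee θ - 1)) := by
  have hz := ee_ne_one h
  unfold DD
  rw [← Finset.Ico_add_one_right_eq_Icc, Finset.sum_Ico_eq_sum_range]
  have h4 : ∀ i : ℕ, ee (((1 + i : ℕ) : ℝ) * θ) = ee θ * ee θ ^ i := by
    intro i
    rw [ee_pow (1 + i) θ, pow_add, pow_one]
  simp_rw [show X + 1 - 1 = X from rfl, h4]
  rw [← Finset.mul_sum, geom_sum_eq hz]

lemma norm_DD (X : ℕ) (θ : ℝ) (h : Real.sin (π * θ) ≠ 0) :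
    ‖DD X θ‖ = |Real.sin (π * (X * θ))| / |Real.sin (π * θ)| := by
  rw [DD_geom X θ h, norm_mul, norm_div]
  have h1 : ‖ee θ‖ = 1 := ee_norm θ
  have h2 : ‖ee θ ^ X - 1‖ = 2 * |Real.sin (π * (X * θ))| := by
    rw [← ee_pow, norm_ee_sub_one]
  have h3 : ‖ee θ - 1‖ = 2 * |Real.sin (π * θ)| := norm_ee_sub_one θ
  rw [h1, h2, h3, one_mul]
  rw [mul_div_mul_left _ _ (by norm_num : (2:ℝ) ≠ 0)]

lemma DD_norm_le (X : ℕ) (θ : ℝ) : ‖DD X θ‖ ≤ X := by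
  unfold DD
  refine (norm_sum_le _ _).trans ?_
  simp [ee_norm, Nat.card_Icc]

lemma ee_nat (n : ℕ) : ee (n : ℝ) = 1 := by
  unfold ee
  rw [show ((2:ℂ) * π * (n:ℝ) * Complex.I) = (n:ℤ) * (2 * π * Complex.I) by push_cast; ring]
  exact Complex.exp_int_mul_two_pi_mul_I n

lemma DD_periodic (X : ℕ) : Function.Periodic (DD X) 1 := by
  intro θ
  unfold DD
  refine Finset.sum_congr rfl fun x _ => ?_
  rw [mul_add, mul_one, ee_add, ee_nat, mul_one]

lemma DD_continuous (X : ℕ) : Continuous (DD X) :=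
  continuous_finset_sum _ (fun x _ => ee_comp_continuous x)

lemma sin_lb {θ : ℝ} (h : |θ| ≤ 1/2) : 2 * |θ| ≤ |Real.sin (π * θ)| := by
  have habs : |Real.sin (π * θ)| = Real.sin (π * |θ|) := by
    rcases le_or_gt 0 θ with h0 | h0
    · rw [abs_of_nonneg h0, abs_of_nonneg]
      exact Real.sin_nonneg_of_nonneg_of_le_pi (by positivity)
        (by nlinarith [Real.pi_pos, (abs_of_nonneg h0) ▸ h])
    · rw [abs_of_neg h0, mul_neg, Real.sin_neg]
      rw [abs_of_nonpos (Real.sin_nonpos_of_nonpos_of_neg_pi_le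
        (by nlinarith [Real.pi_pos]) (by nlinarith [Real.pi_pos, (abs_of_neg h0) ▸ h]))]
  rw [habs]
  have := Real.mul_le_sin (x := π * |θ|) (by positivity)
    (by nlinarith [Real.pi_pos])
  calc 2 * |θ| = 2 / π * (π * |θ|) := by field_simp
    _ ≤ Real.sin (π * |θ|) := this

lemma sin_ne_zero_of {θ : ℝ} (h : |θ| ≤ 1/2) (h0 : θ ≠ 0) : Real.sin (π * θ) ≠ 0 := by
  intro hc
  have h1 := sin_lb h
  rw [hc, abs_zero] at h1
  have h2 : 0 < |θ| := abs_pos.mpr h0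
  linarith

lemma tendsto_X_sin (u : ℝ) (hu : u ≠ 0) :
    Tendsto (fun X : ℕ => (X : ℝ) * Real.sin (π * (u / X))) atTop (𝓝 (π * u)) := by
  have hslope : Tendsto (fun t : ℝ => Real.sin t / t) (𝓝[≠] (0:ℝ)) (𝓝 1) := by
    have h := Real.hasDerivAt_sin 0
    rw [hasDerivAt_iff_tendsto_slope] at h
    rw [Real.cos_zero] at h
    refine h.congr fun t => ?_
    simp [slope_fun_def, Real.sin_zero, div_eq_inv_mul]
  have ht : Tendsto (fun X : ℕ => π * (u / X)) atTop (𝓝[≠] (0:ℝ)) := by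
    apply tendsto_nhdsWithin_of_tendsto_nhds_of_eventually_within
    · have hX : Tendsto (fun X : ℕ => (X : ℝ)) atTop atTop := tendsto_natCast_atTop_atTop
      have := Tendsto.div_atTop (tendsto_const_nhds (x := π * u)) hX
      refine this.congr fun X => ?_
      ring
    · filter_upwards [eventually_ge_atTop 1] with X hX
      have hX0 : (X : ℝ) ≠ 0 := by
        simp only [ne_eq, Nat.cast_eq_zero]; omega
      simp [div_eq_zero_iff, hu, Real.pi_ne_zero, hX0, Set.mem_compl_singleton_iff,
        mul_eq_zero]
  have hcomp := hslope.comp ht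
  have h2 := hcomp.const_mul (π * u)
  rw [mul_one] at h2
  refine h2.congr' ?_
  filter_upwards [eventually_ge_atTop 1] with X hX
  have hX0 : (X : ℝ) ≠ 0 := by
    simp only [ne_eq, Nat.cast_eq_zero]; omega
  have htX : π * (u / X) ≠ 0 := by
    simp [Real.pi_ne_zero, hu, hX0]
  simp only [Function.comp_apply]
  field_simp

lemma tendsto_normDD (u : ℝ) (hu : u ≠ 0) :
    Tendsto (fun X : ℕ => ‖DD X (u / X)‖ / X) atTop
      (𝓝 (|Real.sin (π * u)| / (π * |u|))) := by
  have hden : Tendsto (fun X : ℕ => (X : ℝ) * |Real.sin (π * (u / X))|) atTop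
      (𝓝 (π * |u|)) := by
    have := (tendsto_X_sin u hu).abs
    simpa [abs_mul, Nat.abs_cast, abs_of_pos Real.pi_pos] using this
  have hne : π * |u| ≠ 0 := by
    have : 0 < |u| := abs_pos.mpr hu
    positivity
  have hmain := Tendsto.div (tendsto_const_nhds (x := |Real.sin (π * u)|)) hden hne
  refine hmain.congr' ?_
  have hXgt := tendsto_natCast_atTop_atTop (R := ℝ) |>.eventually_gt_atTop (2 * |u|)
  filter_upwards [eventually_ge_atTop 1, hXgt] with X h1 h2
  simp only [Pi.div_apply]
  have hX0 : (0:ℝ) < X := by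
    have : (1:ℝ) ≤ X := by exact_mod_cast h1
    linarith
  have habs : |u / X| ≤ 1 / 2 := by
    rw [abs_div, abs_of_pos hX0]
    rw [div_le_div_iff₀ hX0 (by norm_num)]
    linarith
  have hne2 : u / X ≠ 0 := div_ne_zero hu (ne_of_gt hX0)
  rw [norm_DD X (u / X) (sin_ne_zero_of habs hne2)]
  rw [show π * ((X : ℝ) * (u / X)) = π * u by field_simp]
  rw [div_div, mul_comm |Real.sin (π * (u / X))| (X:ℝ)]

lemma integral_indicator_eq (s X : ℕ) (hs : 0 < s) (hX : 1 ≤ X) :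
    ∫ u : ℝ, (Set.Ioc (-(X:ℝ)/2) ((X:ℝ)/2)).indicator
        (fun u => (‖DD X (u / X)‖ / X) ^ (2*s)) u
      = (tupleCount s X : ℝ) / (X:ℝ) ^ (2*s - 1) := by
  have hX0 : (0:ℝ) < X := by exact_mod_cast hX
  set G : ℝ → ℝ := fun θ => ‖DD X θ‖ ^ (2*s) with hG
  have hGper : Function.Periodic G 1 := (DD_periodic X).comp fun z => ‖z‖ ^ (2*s)
  rw [MeasureTheory.integral_indicator measurableSet_Ioc]
  rw [← intervalIntegral.integral_of_le (by linarith : -(X:ℝ)/2 ≤ (X:ℝ)/2)]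
  have hfun : ∀ u : ℝ, (‖DD X (u / X)‖ / X) ^ (2*s) = ((X:ℝ) ^ (2*s))⁻¹ * G (u / X) := by
    intro u
    rw [hG, div_pow]
    ring
  simp_rw [hfun]
  rw [intervalIntegral.integral_const_mul]
  have hcomp : ∫ u in (-(X:ℝ)/2)..((X:ℝ)/2), G (u / X)
      = (X:ℝ) * ∫ θ in (-(1:ℝ)/2)..((1:ℝ)/2), G θ := by
    have := intervalIntegral.inv_mul_integral_comp_div (a := -(X:ℝ)/2) (b := (X:ℝ)/2)
      (c := (X:ℝ)) (f := G)
    rw [show (-(X:ℝ)/2) / X = -(1:ℝ)/2 by field_simp, show ((X:ℝ)/2) / X = (1:ℝ)/2 by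
      field_simp]
      at this
    rw [← this]
    field_simp
  rw [hcomp]
  have hper : ∫ θ in (-(1:ℝ)/2)..((1:ℝ)/2), G θ = ∫ θ in (0:ℝ)..1, G θ := by
    have := hGper.intervalIntegral_add_eq (-(1:ℝ)/2) 0
    norm_num at this ⊢
    convert this using 2 <;> norm_num
  rw [hper, hG]
  rw [← tupleCount_eq_norm s X]
  have hpow : (X:ℝ) ^ (2*s) = (X:ℝ) ^ (2*s-1) * X := by
    rw [← pow_succ]
    congr 1
    omega
  rw [hpow]
  field_simp

lemma main_tendsto (s : ℕ) (hs : 0 < s) :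
    Tendsto (fun X : ℕ => (tupleCount s X : ℝ) / (X:ℝ) ^ (2*s-1)) atTop
      (𝓝 (∫ u : ℝ, (|Real.sin (π*u)| / (π * |u|)) ^ (2*s))) := by
  set L : ℝ → ℝ := fun u => (|Real.sin (π*u)| / (π * |u|)) ^ (2*s) with hLdef
  set h : ℕ → ℝ → ℝ := fun X u => (Set.Ioc (-(X:ℝ)/2) ((X:ℝ)/2)).indicator
      (fun u => (‖DD X (u/X)‖ / X) ^ (2*s)) u with hdef
  have hae : ∀ᵐ u : ℝ, u ≠ 0 := by
    refine MeasureTheory.ae_iff.mpr ?_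
    simp only [ne_eq, not_not]
    have he : {a : ℝ | a = 0} = {0} := by ext; simp
    rw [he]
    exact Real.volume_singleton
  have hmeas : ∀ X : ℕ, AEStronglyMeasurable (h X) MeasureTheory.volume := by
    intro X
    have hc : Continuous fun u : ℝ => (‖DD X (u/X)‖ / X) ^ (2*s) :=
      ((((DD_continuous X).comp (continuous_id.div_const _)).norm).div_const _).pow _
    exact (hc.aestronglyMeasurable).indicator measurableSet_Ioc
  have hbound_int : Integrable (fun u : ℝ => 2 * (1 + u^2)⁻¹) :=
    integrable_inv_one_add_sq.const_mul 2
  have hbound : ∀ X : ℕ, ∀ᵐ u : ℝ, ‖h X u‖ ≤ 2 * (1 + u^2)⁻¹ := by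
    intro X
    filter_upwards [hae] with u hu
    have h01 : (0:ℝ) < 1 + u^2 := by positivity
    simp only [hdef]
    rw [Set.indicator_apply]
    split_ifs with hmem
    · obtain ⟨hl, hr⟩ := hmem
      have hX0 : (0:ℝ) < X := by linarith
      have hub : 2 * |u| ≤ (X:ℝ) := by
        rcases abs_cases u with ⟨he, _⟩ | ⟨he, _⟩ <;> rw [he] <;> linarith
      set b := ‖DD X (u/X)‖ / X with hbdef
      have hb0 : 0 ≤ b := by positivity
      have hb1 : b ≤ 1 := (div_le_one hX0).mpr (DD_norm_le X _)
      have habs2 : |u / (X:ℝ)| ≤ 1/2 := by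
        rw [abs_div, abs_of_pos hX0, div_le_div_iff₀ hX0 (by norm_num)]
        linarith
      have hsin := sin_lb habs2
      rw [abs_div, abs_of_pos hX0] at hsin
      have hsinne : Real.sin (π * (u / X)) ≠ 0 :=
        sin_ne_zero_of habs2 (div_ne_zero hu hX0.ne')
      have hden : 0 < |Real.sin (π * (u / X))| := abs_pos.mpr hsinne
      have hnum : |Real.sin (π * ((X:ℝ) * (u / X)))| ≤ 1 :=
        abs_le.mpr ⟨Real.neg_one_le_sin _, Real.sin_le_one _⟩
      have hb2 : b * (2 * |u|) ≤ 1 := by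
        rw [hbdef, norm_DD X (u/X) hsinne, div_div, div_mul_eq_mul_div,
          div_le_one (by positivity)]
        have key : 2 * |u| ≤ |Real.sin (π * (u / X))| * (X:ℝ) := by
          have h4 := mul_le_mul_of_nonneg_right hsin (le_of_lt hX0)
          have h5 : 2 * (|u| / (X:ℝ)) * (X:ℝ) = 2 * |u| := by field_simp
          linarith
        nlinarith [abs_nonneg u]
      rw [Real.norm_eq_abs, abs_of_nonneg (by positivity : (0:ℝ) ≤ b ^ (2*s))]
      have hpow : b ^ (2*s) ≤ b ^ 2 := pow_le_pow_of_le_one hb0 hb1 (by omega)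
      have hb1sq : b ^ 2 ≤ 1 := pow_le_one₀ hb0 hb1
      have hsq : (b * (2 * |u|)) ^ 2 ≤ 1 := pow_le_one₀ (by positivity) hb2
      rw [show (2:ℝ) * (1 + u^2)⁻¹ = 2 / (1 + u^2) by ring, le_div_iff₀ h01]
      have h3 : b ^ (2*s) * (1 + u^2) ≤ b ^ 2 * (1 + u^2) :=
        mul_le_mul_of_nonneg_right hpow (le_of_lt h01)
      nlinarith [sq_abs u, sq_nonneg b, sq_nonneg u]
    · rw [norm_zero]; positivity
  have hlim : ∀ᵐ u : ℝ, Tendsto (fun X : ℕ => h X u) atTop (𝓝 (L u)) := by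
    filter_upwards [hae] with u hu
    have hpow := (tendsto_normDD u hu).pow (2*s)
    refine hpow.congr' ?_
    have hXgt := (tendsto_natCast_atTop_atTop (R := ℝ)).eventually_gt_atTop (2*|u|)
    filter_upwards [hXgt] with X h2
    have habs := abs_lt.mp (by linarith [abs_nonneg u] : |u| < (X:ℝ)/2)
    simp only [hdef]
    rw [Set.indicator_of_mem]
    constructor
    · linarith [habs.1]
    · linarith [habs.2]
  have hDCT := MeasureTheory.tendsto_integral_of_dominated_convergence _ hmeas hbound_int
    hbound hlim
  refine hDCT.congr' ?_
  filter_upwards [eventually_ge_atTop 1] with X hX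
  exact integral_indicator_eq s X hs hX

lemma L_integrable (s : ℕ) (hs : 0 < s) :
    Integrable (fun u : ℝ => (|Real.sin (π*u)| / (π * |u|)) ^ (2*s)) := by
  have hmeas : AEStronglyMeasurable
      (fun u : ℝ => (|Real.sin (π*u)| / (π * |u|)) ^ (2*s)) MeasureTheory.volume := by
    apply Measurable.aestronglyMeasurable
    apply Measurable.pow_const
    apply Measurable.div
    · exact (Real.measurable_sin.comp (measurable_const.mul measurable_id)).abs
    · exact (measurable_const.mul measurable_id.abs)
  refine Integrable.mono' (integrable_inv_one_add_sq.const_mul 2) hmeas ?_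
  filter_upwards [] with u
  have h01 : (0:ℝ) < 1 + u^2 := by positivity
  set b := |Real.sin (π*u)| / (π * |u|) with hbdef
  have hb0 : 0 ≤ b := by positivity
  have hb1 : b ≤ 1 := by
    rcases eq_or_ne u 0 with rfl | hu
    · simp [hbdef]
    · have hup : 0 < |u| := abs_pos.mpr hu
      rw [hbdef, div_le_one (by positivity)]
      calc |Real.sin (π*u)| ≤ |π * u| := Real.abs_sin_le_abs
        _ = π * |u| := by rw [abs_mul, abs_of_pos Real.pi_pos]
  have hb2 : b * (2 * |u|) ≤ 1 := by
    rcases eq_or_ne u 0 with rfl | hu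
    · simp [hbdef]
    · have hup : 0 < |u| := abs_pos.mpr hu
      have hs1 : |Real.sin (π*u)| ≤ 1 :=
        abs_le.mpr ⟨Real.neg_one_le_sin _, Real.sin_le_one _⟩
      rw [hbdef, div_mul_eq_mul_div, div_le_one (by positivity)]
      nlinarith [Real.pi_gt_three]
  rw [Real.norm_eq_abs, abs_of_nonneg (by positivity : (0:ℝ) ≤ b ^ (2*s))]
  have hpow : b ^ (2*s) ≤ b ^ 2 := pow_le_pow_of_le_one hb0 hb1 (by omega)
  have hb1sq : b ^ 2 ≤ 1 := pow_le_one₀ hb0 hb1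
  have hsq : (b * (2 * |u|)) ^ 2 ≤ 1 := pow_le_one₀ (by positivity) hb2
  rw [show (2:ℝ) * (1 + u^2)⁻¹ = 2 / (1 + u^2) by ring, le_div_iff₀ h01]
  have h3 : b ^ (2*s) * (1 + u^2) ≤ b ^ 2 * (1 + u^2) :=
    mul_le_mul_of_nonneg_right hpow (le_of_lt h01)
  nlinarith [sq_abs u, sq_nonneg b, sq_nonneg u]

lemma L_pos (s : ℕ) (hs : 0 < s) :
    0 < ∫ u : ℝ, (|Real.sin (π*u)| / (π * |u|)) ^ (2*s) := by
  set L : ℝ → ℝ := fun u => (|Real.sin (π*u)| / (π * |u|)) ^ (2*s) with hLdef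
  set c : ℝ := (2/π)^(2*s) with hcdef
  have hc0 : 0 < c := by positivity
  have hL_int := L_integrable s hs
  have hnn : 0 ≤ᵐ[MeasureTheory.volume] L :=
    Filter.Eventually.of_forall fun u => by positivity
  have hptw : ∀ u ∈ Set.Ioc (1/4:ℝ) (1/2), c ≤ L u := by
    intro u hu
    obtain ⟨hu1, hu2⟩ := hu
    have hu0 : 0 < u := by linarith
    have hsin : 2 * u ≤ Real.sin (π * u) := by
      have := Real.mul_le_sin (x := π * u) (by positivity) (by nlinarith [Real.pi_pos])
      calc 2 * u = 2 / π * (π * u) := by field_simp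
        _ ≤ Real.sin (π * u) := this
    have hbase : 2/π ≤ |Real.sin (π*u)| / (π * |u|) := by
      rw [abs_of_pos hu0, abs_of_nonneg (by linarith : (0:ℝ) ≤ Real.sin (π * u))]
      rw [div_le_div_iff₀ Real.pi_pos (by positivity)]
      nlinarith [Real.pi_pos]
    exact pow_le_pow_left₀ (by positivity) hbase (2*s)
  have hset := MeasureTheory.setIntegral_ge_of_const_le (measurableSet_Ioc)
    (by
      rw [Real.volume_Ioc]
      exact ENNReal.ofReal_ne_top)
    hptw (hL_int.integrableOn)
  have htot := MeasureTheory.setIntegral_le_integral hL_int hnn (s := Set.Ioc (1/4:ℝ) (1/2))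
  have hvol : (MeasureTheory.volume (Set.Ioc (1/4:ℝ) (1/2))).toReal = 1/4 := by
    rw [Real.volume_Ioc, ENNReal.toReal_ofReal (by norm_num)]
    norm_num
  rw [measureReal_def, hvol, smul_eq_mul] at hset
  nlinarith

theorem tupleCount_asymptotic (s : ℕ) (hs : 0 < s) :
    ∃ C : ℝ, 0 < C ∧
      Tendsto (fun X : ℕ => (tupleCount s X : ℝ) / (C * (X : ℝ) ^ (2 * s - 1)))
        atTop (nhds 1) := by
  refine ⟨∫ u : ℝ, (|Real.sin (π*u)| / (π * |u|)) ^ (2*s), L_pos s hs, ?_⟩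
  have h := (main_tendsto s hs).div_const (∫ u : ℝ, (|Real.sin (π*u)| / (π * |u|)) ^ (2*s))
  rw [div_self (ne_of_gt (L_pos s hs))] at h
  refine h.congr fun X => ?_
  rw [div_div, mul_comm]
end
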